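/- arXiv:1204.4840 — 2 statements merged into one kernel-verified Lean document; each statement's English description precedes it below -/
import Mathlib

section
/- Let 0 = r₀ < r₁ < ⋯ < r_L and 0 ≤ a₀ < a₁ < ⋯ < a_L be such that the points (a_ℓ, r_ℓ) define a concave nondecreasing piecewise linear function. Fix ω > 0 and define breakpoints s₀ = 0, s_{L+1} = ∞, and s_ℓ = (a_ℓ − a_{ℓ−1}) / (ω (r_ℓ − r_{ℓ−1})) for ℓ = 1,…,L. Then s₁ ≤ s₂ ≤ ⋯ ≤ s_L, and for each ℓ and each s ∈ [s_ℓ, s_{ℓ+1}), the index ℓ maximizes j ↦ ω r_j − a_j / s over j ∈ {0,…,L}. -/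
/-- Unimodal chain lemma: if `f` is nondecreasing before `ℓ` and nonincreasing after,
then `f ℓ` is a maximum among indices `≤ L`. -/
lemma aux_chain (L ℓ : ℕ) (hℓ : ℓ ≤ L) (f : ℕ → ℝ)
    (hup : ∀ n, n < ℓ → f n ≤ f (n + 1))
    (hdown : ∀ n, ℓ ≤ n → n < L → f (n + 1) ≤ f n) :
    ∀ j ≤ L, f j ≤ f ℓ := by
  have up : ∀ n ≤ ℓ, ∀ m ≤ n, f m ≤ f n := by
    intro n
    induction n with
    | zero => intro _ m hm; interval_cases m; exact le_refl _
    | succ k ih =>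
      intro hk m hm
      rcases Nat.lt_or_ge m (k + 1) with h | h
      · exact (ih (le_trans (Nat.le_succ k) hk) m (Nat.lt_succ_iff.mp h)).trans
          (hup k (Nat.lt_of_lt_of_le (Nat.lt_succ_self k) hk))
      · have : m = k + 1 := le_antisymm hm h
        subst this; exact le_refl _
  have down : ∀ n ≤ L, ℓ ≤ n → f n ≤ f ℓ := by
    intro n
    induction n with
    | zero => intro _ h; interval_cases ℓ; exact le_refl _
    | succ k ih =>
      intro hk h
      rcases Nat.lt_or_ge ℓ (k + 1) with h' | h'
      · exact (hdown k (Nat.lt_succ_iff.mp h') (Nat.lt_of_succ_le hk)).trans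
          (ih (le_trans (Nat.le_succ k) hk) (Nat.lt_succ_iff.mp h'))
      · have : ℓ = k + 1 := le_antisymm h h'
        subst this; exact le_refl _
  intro j hj
  rcases Nat.lt_or_ge j ℓ with h | h
  · exact up ℓ le_rfl j h.le
  · exact down j hj h

/-- Single-sensor decision regions: with breakpoints
`s_ℓ = (a_ℓ − a_{ℓ−1})/(ω (r_ℓ − r_{ℓ−1}))` (here `s i` is the paper's `s_{i+1}`), the
breakpoints are ordered, and on each interval `[s_ℓ, s_{ℓ+1})` (with `s₀ = 0`,
`s_{L+1} = ∞`) mode `ℓ` maximizes `j ↦ ω r_j − a_j / x`. -/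
theorem stmt6 (L : ℕ) (r a : Fin (L + 1) → ℝ)
    (hr0 : r 0 = 0) (hrmono : StrictMono r)
    (ha0 : 0 ≤ a 0) (hamono : StrictMono a)
    -- concavity of the piecewise linear interpolation through (a_ℓ, r_ℓ):
    -- the inverse slopes (a_ℓ − a_{ℓ−1})/(r_ℓ − r_{ℓ−1}) are nondecreasing in ℓ
    (hconc : ∀ i j : Fin L, i ≤ j →
      (a i.succ - a i.castSucc) / (r i.succ - r i.castSucc) ≤
      (a j.succ - a j.castSucc) / (r j.succ - r j.castSucc))
    (ω : ℝ) (hω : 0 < ω)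
    (s : Fin L → ℝ)
    (hs : ∀ i : Fin L, s i = (a i.succ - a i.castSucc) / (ω * (r i.succ - r i.castSucc))) :
    (∀ i j : Fin L, i ≤ j → s i ≤ s j) ∧
    (∀ ℓ : Fin (L + 1), ∀ x : ℝ, 0 < x →
      (∀ i : Fin L, (i : ℕ) < (ℓ : ℕ) → s i ≤ x) →   -- x ≥ s_ℓ
      (∀ i : Fin L, (ℓ : ℕ) ≤ (i : ℕ) → x < s i) →   -- x < s_{ℓ+1}
      ∀ j : Fin (L + 1), ω * r j - a j / x ≤ ω * r ℓ - a ℓ / x) := by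
  have hrd : ∀ i : Fin L, 0 < r i.succ - r i.castSucc := by
    intro i; have := hrmono ((Fin.castSucc_lt_succ (i := i))); linarith
  have had : ∀ i : Fin L, 0 < a i.succ - a i.castSucc := by
    intro i; have := hamono ((Fin.castSucc_lt_succ (i := i))); linarith
  constructor
  · intro i j hij
    rw [hs i, hs j, mul_comm ω _, mul_comm ω _, ← div_div, ← div_div]
    exact div_le_div_of_nonneg_right (hconc i j hij) hω.le
  · intro ℓ x hx hlow hhigh j
    set f : ℕ → ℝ := fun n => ω * r ⟨min n L, Nat.lt_succ_of_le (min_le_right n L)⟩ -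
      a ⟨min n L, Nat.lt_succ_of_le (min_le_right n L)⟩ / x with hf
    have hfval : ∀ k : Fin (L + 1), f (k : ℕ) = ω * r k - a k / x := by
      intro k
      have : min (k : ℕ) L = (k : ℕ) := min_eq_left (Nat.lt_succ_iff.mp k.isLt)
      simp only [hf]
      congr 1 <;> congr 1 <;> exact congrArg _ (Fin.ext this)
    have hstep : ∀ n (h : n < L),
        f (n + 1) - f n = ω * (r (Fin.mk n h).succ - r (Fin.mk n h).castSucc) -
          (a (Fin.mk n h).succ - a (Fin.mk n h).castSucc) / x := by
      intro n h
      have h1 : min n L = n := min_eq_left h.le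
      have h2 : min (n + 1) L = n + 1 := min_eq_left h
      simp only [hf, h1, h2]
      have e1 : (⟨n + 1, Nat.lt_succ_of_le h⟩ : Fin (L + 1)) = (Fin.mk n h).succ := rfl
      have e2 : (⟨n, Nat.lt_succ_of_le h.le⟩ : Fin (L + 1)) = (Fin.mk n h).castSucc := rfl
      rw [e1, e2]; ring
    clear_value f
    have key := aux_chain L (ℓ : ℕ) (Nat.lt_succ_iff.mp ℓ.isLt) f
      (by
        intro n hn
        have hnL : n < L := lt_of_lt_of_le hn (Nat.lt_succ_iff.mp ℓ.isLt)
        set i : Fin L := ⟨n, hnL⟩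
        have hsx : s i ≤ x := hlow i hn
        rw [hs i] at hsx
        have hpos : 0 < ω * (r i.succ - r i.castSucc) := mul_pos hω (hrd i)
        have h1 : a i.succ - a i.castSucc ≤ x * (ω * (r i.succ - r i.castSucc)) :=
          (div_le_iff₀ hpos).mp hsx
        have h2 : (a i.succ - a i.castSucc) / x ≤ ω * (r i.succ - r i.castSucc) :=
          (div_le_iff₀ hx).mpr (by linarith)
        have h3 := hstep n hnL
        rw [show (⟨n, hnL⟩ : Fin L) = i from rfl] at h3
        clear_value i
        linarith)
      (by
        intro n hn hnL
        set i : Fin L := ⟨n, hnL⟩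
        have hsx : x < s i := hhigh i hn
        rw [hs i] at hsx
        have hpos : 0 < ω * (r i.succ - r i.castSucc) := mul_pos hω (hrd i)
        have h1 : x * (ω * (r i.succ - r i.castSucc)) < a i.succ - a i.castSucc :=
          (lt_div_iff₀ hpos).mp hsx
        have h2 : ω * (r i.succ - r i.castSucc) < (a i.succ - a i.castSucc) / x :=
          (lt_div_iff₀ hx).mpr (by linarith)
        have h3 := hstep n hnL
        rw [show (⟨n, hnL⟩ : Fin L) = i from rfl] at h3
        clear_value i
        linarith)
      (j : ℕ) (Nat.lt_succ_iff.mp j.isLt)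
    rw [hfval j, hfval ℓ] at key
    exact key
end

section
/- Let μ : [a₀, ∞) → ℝ be bounded by R_L, and construct points (ã_ℓ, μ̃_ℓ) recursively: ã₀ = a₀, μ̃₀ = 0; given (ã_ℓ, μ̃_ℓ), if there exists a slope m_ℓ ≥ 0 such that the line y = m_ℓ(x − ã_ℓ) + μ̃_ℓ satisfies μ(x) ≤ m_ℓ(x − ã_ℓ) + μ̃_ℓ for all x > ã_ℓ, set ã_{ℓ+1} to be the abscissa where this line meets y = R_{ℓ+1} and μ̃_{ℓ+1} = R_{ℓ+1}. Then the piecewise linear function μ̃ through these points (constant R_L after ã_L) is concave, nondecreasing, and satisfies μ̃(x) ≥ μ(x) for all x ≥ a₀, provided 0 < R₁ < ⋯ < R_L and each μ̃_ℓ < R_{ℓ+1}. -/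
/-- Construction of the piecewise linear concave upper bound `μ̃` on the effective rate
function `μ`: starting from `(ã₀, 0)`, each `m_ℓ` is the least nonnegative slope whose
line through `(ã_ℓ, R_ℓ)` dominates `μ` beyond `ã_ℓ` (the paper's tangent line), and
`ã_{ℓ+1}` is where that line meets the level `R_{ℓ+1}`.  The resulting piecewise linear
interpolation `g` (constant `R_L` after `ã_L`) is concave, nondecreasing, and dominates
`μ` on `[a₀, ∞)`. -/
theorem stmt13 (L : ℕ) (hL : 0 < L) (a0 : ℝ) (R : Fin (L + 1) → ℝ)
    (hR0 : R 0 = 0) (hRmono : StrictMono R)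
    (μ g : ℝ → ℝ)
    (hμbdd : ∀ x, a0 ≤ x → μ x ≤ R (Fin.last L))
    (atil : Fin (L + 1) → ℝ) (m : Fin L → ℝ)
    (ha0 : atil 0 = a0)
    -- existence of a dominating nonnegative slope at each step
    (hex : ∀ ℓ : Fin L, ∃ c : ℝ, 0 ≤ c ∧
      ∀ x, atil ℓ.castSucc ≤ x → μ x ≤ c * (x - atil ℓ.castSucc) + R ℓ.castSucc)
    -- m_ℓ is the least such slope (the tangent line of the construction)
    (hm : ∀ ℓ : Fin L, m ℓ = sInf {c : ℝ | 0 ≤ c ∧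
      ∀ x, atil ℓ.castSucc ≤ x → μ x ≤ c * (x - atil ℓ.castSucc) + R ℓ.castSucc})
    -- ã_{ℓ+1} is the abscissa where the line meets y = R_{ℓ+1}
    (hnext : ∀ ℓ : Fin L,
      m ℓ * (atil ℓ.succ - atil ℓ.castSucc) + R ℓ.castSucc = R ℓ.succ)
    -- g is the piecewise linear interpolation through the points (ã_ℓ, R_ℓ) …
    (hgseg : ∀ ℓ : Fin L, ∀ x ∈ Set.Icc (atil ℓ.castSucc) (atil ℓ.succ),
      g x = R ℓ.castSucc +
        (R ℓ.succ - R ℓ.castSucc) / (atil ℓ.succ - atil ℓ.castSucc) * (x - atil ℓ.castSucc))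
    -- … constant R_L after ã_L
    (hgtail : ∀ x, atil (Fin.last L) ≤ x → g x = R (Fin.last L)) :
    ConcaveOn ℝ (Set.Ici a0) g ∧ MonotoneOn g (Set.Ici a0) ∧
    ∀ x, a0 ≤ x → μ x ≤ g x := by
  classical
  haveI : Nonempty (Fin L) := ⟨⟨0, hL⟩⟩
  set S : Fin L → Set ℝ := fun ℓ => {c : ℝ | 0 ≤ c ∧
      ∀ x, atil ℓ.castSucc ≤ x → μ x ≤ c * (x - atil ℓ.castSucc) + R ℓ.castSucc} with hSdef
  have hbdd : ∀ ℓ, BddBelow (S ℓ) := fun ℓ => ⟨0, fun c hc => hc.1⟩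
  have hclosed : ∀ ℓ, IsClosed (S ℓ) := by
    intro ℓ
    have : S ℓ = Set.Ici 0 ∩ ⋂ x ∈ Set.Ici (atil ℓ.castSucc),
        {c : ℝ | μ x ≤ c * (x - atil ℓ.castSucc) + R ℓ.castSucc} := by
      ext c
      simp [hSdef, Set.mem_iInter, Set.mem_Ici]
    rw [this]
    refine isClosed_Ici.inter (isClosed_biInter fun x hx => ?_)
    exact isClosed_le continuous_const (by continuity)
  have hmem : ∀ ℓ, m ℓ ∈ S ℓ := by
    intro ℓ
    have := (hclosed ℓ).csInf_mem (hex ℓ) (hbdd ℓ)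
    rwa [← hm ℓ] at this
  have hm0 : ∀ ℓ, 0 ≤ m ℓ := fun ℓ => (hmem ℓ).1
  have hdom : ∀ ℓ, ∀ x, atil ℓ.castSucc ≤ x →
      μ x ≤ m ℓ * (x - atil ℓ.castSucc) + R ℓ.castSucc := fun ℓ => (hmem ℓ).2
  -- positivity of slopes and gaps
  have hRlt : ∀ ℓ : Fin L, R ℓ.castSucc < R ℓ.succ :=
    fun ℓ => hRmono (Fin.castSucc_lt_succ (i := ℓ))
  have hprod : ∀ ℓ : Fin L, 0 < m ℓ * (atil ℓ.succ - atil ℓ.castSucc) := by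
    intro ℓ; have := hnext ℓ; have := hRlt ℓ; linarith
  have hmpos : ∀ ℓ : Fin L, 0 < m ℓ := by
    intro ℓ
    rcases (hm0 ℓ).lt_or_eq with h | h
    · exact h
    · exfalso; have := hprod ℓ; rw [← h] at this; simp at this
  have hgap : ∀ ℓ : Fin L, 0 < atil ℓ.succ - atil ℓ.castSucc := by
    intro ℓ
    by_contra hc
    push_neg at hc
    have := hprod ℓ
    nlinarith [hm0 ℓ]
  have hatil : StrictMono atil := by
    refine Fin.strictMono_iff_lt_succ.mpr fun ℓ => ?_
    have := hgap ℓ; linarith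
  -- slopes are nonincreasing
  have hslope : ∀ (k : ℕ) (hk1 : k + 1 < L),
      m ⟨k + 1, hk1⟩ ≤ m ⟨k, by omega⟩ := by
    intro k hk1
    have hkL : k < L := by omega
    rw [hm ⟨k + 1, hk1⟩]
    refine csInf_le (hbdd _) ?_
    refine ⟨hm0 ⟨k, hkL⟩, ?_⟩
    intro x hx
    have hcs : (⟨k + 1, hk1⟩ : Fin L).castSucc = (⟨k, hkL⟩ : Fin L).succ := rfl
    rw [hcs] at hx ⊢
    have hx' : atil (⟨k, hkL⟩ : Fin L).castSucc ≤ x :=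
      le_trans (hatil (Fin.castSucc_lt_succ)).le hx
    have h1 := hdom ⟨k, hkL⟩ x hx'
    have h2 := hnext ⟨k, hkL⟩
    linarith
  -- the supporting lines
  set F : Fin L → ℝ → ℝ :=
    fun ℓ x => m ℓ * (x - atil ℓ.castSucc) + R ℓ.castSucc with hFdef
  -- P : going left along the chain, later lines lie below earlier ones
  have P : ∀ (n : ℕ) (hn : n < L) (i : Fin L), i.1 ≤ n → ∀ x,
      atil (⟨n, hn⟩ : Fin L).castSucc ≤ x → F ⟨n, hn⟩ x ≤ F i x := by
    intro n
    induction n with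
    | zero =>
      intro hn i hi x hx
      have hv : (i : ℕ) = 0 := by omega
      have : i = ⟨0, hn⟩ := Fin.ext hv
      rw [this]
    | succ k ih =>
      intro hn i hi x hx
      rcases eq_or_lt_of_le hi with h | h
      · have : i = ⟨k + 1, hn⟩ := Fin.ext h
        rw [this]
      · have hkL : k < L := by omega
        have hcs : (⟨k + 1, hn⟩ : Fin L).castSucc = (⟨k, hkL⟩ : Fin L).succ := rfl
        have step : F ⟨k + 1, hn⟩ x ≤ F ⟨k, hkL⟩ x := by
          have hs := hslope k hn
          have h2 := hnext ⟨k, hkL⟩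
          have hx0 : 0 ≤ x - atil (⟨k + 1, hn⟩ : Fin L).castSucc := by linarith
          have := mul_le_mul_of_nonneg_right hs hx0
          simp only [hFdef]
          rw [hcs] at this ⊢
          linarith
        have hx' : atil (⟨k, hkL⟩ : Fin L).castSucc ≤ x := by
          have := hatil (Fin.castSucc_lt_succ (i := (⟨k, hkL⟩ : Fin L)))
          rw [← hcs] at this
          linarith
        exact le_trans step (ih hkL i (by omega) x hx')
  -- Q : going right along the chain, later lines lie above earlier ones (left of kink)
  have Q : ∀ (n : ℕ) (hn : n < L) (i : Fin L), i.1 ≤ n → ∀ x,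
      x ≤ atil i.succ → F i x ≤ F ⟨n, hn⟩ x := by
    intro n
    induction n with
    | zero =>
      intro hn i hi x hx
      have hv : (i : ℕ) = 0 := by omega
      have : i = ⟨0, hn⟩ := Fin.ext hv
      rw [this]
    | succ k ih =>
      intro hn i hi x hx
      rcases eq_or_lt_of_le hi with h | h
      · have : i = ⟨k + 1, hn⟩ := Fin.ext h
        rw [this]
      · have hkL : k < L := by omega
        have hik : i.1 ≤ k := by omega
        have hmid : F i x ≤ F ⟨k, hkL⟩ x := ih hkL i hik x hx
        have hxk : x ≤ atil (⟨k, hkL⟩ : Fin L).succ := by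
          refine le_trans hx ?_
          have : i.succ ≤ (⟨k, hkL⟩ : Fin L).succ := by
            simp [Fin.le_def]; omega
          exact hatil.monotone this
        have hcs : (⟨k + 1, hn⟩ : Fin L).castSucc = (⟨k, hkL⟩ : Fin L).succ := rfl
        have step : F ⟨k, hkL⟩ x ≤ F ⟨k + 1, hn⟩ x := by
          have hs := hslope k hn
          have h2 := hnext ⟨k, hkL⟩
          have hx0 : x - atil (⟨k + 1, hn⟩ : Fin L).castSucc ≤ 0 := by
            rw [hcs]; linarith
          have := mul_le_mul_of_nonpos_right hs hx0
          simp only [hFdef]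
          rw [hcs] at this ⊢
          linarith
        exact le_trans hmid step
  -- tail bound: beyond atil L every line is above R L
  have hL1 : L - 1 < L := by omega
  have hlast : (⟨L - 1, hL1⟩ : Fin L).succ = Fin.last L := Fin.ext (by simp; omega)
  have htail : ∀ (j : Fin L) (x : ℝ), atil (Fin.last L) ≤ x → R (Fin.last L) ≤ F j x := by
    intro j x hx
    have hxc : atil (⟨L - 1, hL1⟩ : Fin L).castSucc ≤ x := by
      refine le_trans ?_ hx
      rw [← hlast]
      exact (hatil (Fin.castSucc_lt_succ)).le
    have h1 : R (Fin.last L) ≤ F ⟨L - 1, hL1⟩ x := by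
      have h2 := hnext ⟨L - 1, hL1⟩
      rw [hlast] at h2
      have h3 : m ⟨L - 1, hL1⟩ * (atil (Fin.last L) - atil (⟨L - 1, hL1⟩ : Fin L).castSucc)
          ≤ m ⟨L - 1, hL1⟩ * (x - atil (⟨L - 1, hL1⟩ : Fin L).castSucc) :=
        mul_le_mul_of_nonneg_left (by linarith) (hm0 _)
      simp only [hFdef]
      linarith
    exact h1.trans (P (L - 1) hL1 j (by omega) x hxc)
  -- segment cap: left of its kink each line is below R L
  have hcap : ∀ (ℓ : Fin L) (x : ℝ), x ≤ atil ℓ.succ → F ℓ x ≤ R (Fin.last L) := by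
    intro ℓ x hx
    have h2 := hnext ℓ
    have h3 := mul_le_mul_of_nonneg_left
      (sub_le_sub_right hx (atil ℓ.castSucc)) (hm0 ℓ)
    have h4 : R ℓ.succ ≤ R (Fin.last L) := hRmono.monotone (Fin.le_last _)
    simp only [hFdef]
    linarith
  -- define the auxiliary function h
  have hne : (Finset.univ : Finset (Fin L)).Nonempty := Finset.univ_nonempty
  set h : ℝ → ℝ :=
    fun x => min (R (Fin.last L)) (Finset.univ.inf' hne fun j => F j x) with hhdef
  -- locating a point in a segment
  have hfind : ∀ x, a0 ≤ x → x < atil (Fin.last L) →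
      ∃ ℓ : Fin L, atil ℓ.castSucc ≤ x ∧ x ≤ atil ℓ.succ := by
    intro x hx hxL
    have key : ∀ (n : ℕ) (hn : n ≤ L), x < atil ⟨n, by omega⟩ →
        ∃ ℓ : Fin L, atil ℓ.castSucc ≤ x ∧ x ≤ atil ℓ.succ := by
      intro n
      induction n with
      | zero =>
        intro hn h0
        exfalso
        have : atil ⟨0, by omega⟩ = a0 := by
          rw [← ha0]; congr 1
        linarith
      | succ k ih =>
        intro hn hlt
        have hkL : k < L := by omega
        rcases le_or_gt (atil ⟨k, by omega⟩) x with hk | hk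
        · exact ⟨⟨k, hkL⟩, hk, hlt.le⟩
        · exact ih (by omega) hk
    have : x < atil ⟨L, by omega⟩ := hxL
    exact key L le_rfl this
  -- g agrees with h on [a0, ∞)
  have heq : Set.EqOn g h (Set.Ici a0) := by
    intro x hx
    simp only [Set.mem_Ici] at hx
    rcases le_or_gt (atil (Fin.last L)) x with hxt | hxt
    · rw [hgtail x hxt, hhdef]
      have : R (Fin.last L) ≤ Finset.univ.inf' hne fun j => F j x :=
        Finset.le_inf' hne _ fun j _ => htail j x hxt
      simp [min_eq_left this]
    · obtain ⟨ℓ, h1, h2⟩ := hfind x hx hxt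
      have hFle : ∀ j : Fin L, F ℓ x ≤ F j x := by
        intro j
        rcases le_total j.1 ℓ.1 with hj | hj
        · have := P ℓ.1 ℓ.isLt j hj x (by simpa using h1)
          simpa using this
        · have := Q j.1 j.isLt ℓ hj x h2
          simpa using this
      have hinfeq : (Finset.univ.inf' hne fun j => F j x) = F ℓ x :=
        le_antisymm (Finset.inf'_le _ (Finset.mem_univ ℓ))
          (Finset.le_inf' hne _ fun j _ => hFle j)
      have hgx : g x = F ℓ x := by
        rw [hgseg ℓ x ⟨h1, h2⟩]
        have hg0 : atil ℓ.succ - atil ℓ.castSucc ≠ 0 := ne_of_gt (hgap ℓ)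
        have hsl : (R ℓ.succ - R ℓ.castSucc) / (atil ℓ.succ - atil ℓ.castSucc) = m ℓ := by
          rw [div_eq_iff hg0]
          have := hnext ℓ; linarith
        rw [hsl]
        simp only [hFdef]
        ring
      rw [hgx, hhdef]
      simp only
      rw [hinfeq, min_eq_right (hcap ℓ x h2)]
  -- affine functions are concave
  have haff : ∀ (c e d : ℝ), ConcaveOn ℝ (Set.Ici a0) (fun x => c * (x - e) + d) := by
    intro c e d
    refine ⟨convex_Ici a0, ?_⟩
    intro x _ y _ p q hp hq hpq
    simp only [smul_eq_mul]
    apply le_of_eq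
    linear_combination (d - c * e) * hpq
  have hFconc : ∀ j, ConcaveOn ℝ (Set.Ici a0) (F j) := fun j => haff _ _ _
  have hconst : ConcaveOn ℝ (Set.Ici a0) (fun _ : ℝ => R (Fin.last L)) := by
    have := haff 0 0 (R (Fin.last L))
    simpa using this
  have hinfconc : ∀ (s : Finset (Fin L)) (hs : s.Nonempty),
      ConcaveOn ℝ (Set.Ici a0) (fun x => s.inf' hs fun j => F j x) := by
    intro s hs
    induction hs using Finset.Nonempty.cons_induction with
    | singleton j => simpa using hFconc j
    | cons j s hj hs ih =>
      have : (fun x => (Finset.cons j s hj).inf' (Finset.cons_nonempty hj) fun k => F k x)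
          = (F j) ⊓ (fun x => s.inf' hs fun k => F k x) := by
        funext x
        rw [Finset.inf'_cons hs]
        rfl
      rw [this]
      exact (hFconc j).inf ih
  have hhconc : ConcaveOn ℝ (Set.Ici a0) h := by
    have : h = (fun _ : ℝ => R (Fin.last L)) ⊓ (fun x => Finset.univ.inf' hne fun j => F j x) := by
      funext x; simp [hhdef, Pi.inf_apply]
    rw [this]
    exact hconst.inf (hinfconc _ hne)
  -- monotonicity of h
  have hFmono : ∀ j, Monotone (F j) := by
    intro j x y hxy
    simp only [hFdef]
    have := mul_le_mul_of_nonneg_left (sub_le_sub_right hxy (atil j.castSucc)) (hm0 j)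
    linarith
  have hhmono : Monotone h := by
    intro x y hxy
    simp only [hhdef]
    refine min_le_min le_rfl ?_
    refine Finset.le_inf' hne _ fun j _ => ?_
    exact (Finset.inf'_le _ (Finset.mem_univ j)).trans (hFmono j hxy)
  refine ⟨⟨convex_Ici a0, ?_⟩, ?_, ?_⟩
  · intro x hx y hy p q hp hq hpq
    have hmem' : p • x + q • y ∈ Set.Ici a0 := (convex_Ici a0) hx hy hp hq hpq
    rw [heq hx, heq hy, heq hmem']
    exact hhconc.2 hx hy hp hq hpq
  · intro x hx y hy hxy
    rw [heq hx, heq hy]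
    exact hhmono hxy
  · intro x hx
    rcases le_or_gt (atil (Fin.last L)) x with hxt | hxt
    · rw [hgtail x hxt]
      exact hμbdd x hx
    · obtain ⟨ℓ, h1, h2⟩ := hfind x hx hxt
      have hgx : g x = F ℓ x := by
        rw [hgseg ℓ x ⟨h1, h2⟩]
        have hg0 : atil ℓ.succ - atil ℓ.castSucc ≠ 0 := ne_of_gt (hgap ℓ)
        have hsl : (R ℓ.succ - R ℓ.castSucc) / (atil ℓ.succ - atil ℓ.castSucc) = m ℓ := by
          rw [div_eq_iff hg0]
          have := hnext ℓ; linarith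
        rw [hsl]
        simp only [hFdef]
        ring
      rw [hgx]
      exact hdom ℓ x h1
end
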